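/- For every positive integer c, 4/(840c-599) = 1/(210c-147) + 1/(42(10c-7)(840c-599)) + 1/(2(10c-7)(840c-599)); hence the Erdős–Straus equation has a solution for all n ≡ 241 (mod 840). -/
import Mathlib

lemma key (k : ℕ) :
    (4 : ℚ) / (840 * k + 241) =
      1 / (210 * k + 63) + 1 / (42 * (10 * k + 3) * (840 * k + 241))
        + 1 / (2 * (10 * k + 3) * (840 * k + 241)) := by
  have h1 : (840 * (k:ℚ) + 241) ≠ 0 := by positivity
  have h2 : (210 * (k:ℚ) + 63) ≠ 0 := by positivity
  have h3 : (10 * (k:ℚ) + 3) ≠ 0 := by positivity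
  field_simp
  ring

theorem stmt_17 (c : ℕ) (hc : 1 ≤ c) :
    (4 : ℚ) / (840 * c - 599) =
      1 / (210 * c - 147) + 1 / (42 * (10 * c - 7) * (840 * c - 599))
        + 1 / (2 * (10 * c - 7) * (840 * c - 599)) ∧
    ∀ n : ℕ, 0 < n → n % 840 = 241 →
      ∃ x y z : ℕ, 0 < x ∧ 0 < y ∧ 0 < z ∧
        (4 : ℚ) / n = 1 / x + 1 / y + 1 / z := by
  constructor
  · obtain ⟨k, rfl⟩ : ∃ k, c = k + 1 := ⟨c - 1, by omega⟩
    have := key k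
    push_cast at this ⊢
    linear_combination this
  · intro n hn hmod
    obtain ⟨k, rfl⟩ : ∃ k, n = 840 * k + 241 := ⟨n / 840, by omega⟩
    refine ⟨210 * k + 63, 42 * (10 * k + 3) * (840 * k + 241),
      2 * (10 * k + 3) * (840 * k + 241), by positivity, by positivity, by positivity, ?_⟩
    have := key k
    push_cast
    linear_combination this
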